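/- Let O_1, …, O_n be pairwise incomparable valuation subrings of a field K and let R = O_1 ∩ ⋯ ∩ O_n. Then for every R-submodule M of K and every x ∈ K: x ∈ M if and only if for each i ∈ {1,…,n} there is some a ∈ M with x ∈ a·O_i (i.e., x = a·r for some r ∈ O_i). In other words, M is determined coordinatewise by the valuations: membership in M is equivalent to having, at each valuation, value at least that of some element of M. -/

import Mathlib

open Finset

lemma exists_good_exponent {ι : Type*} {Γ : ι → Type*}
    [∀ j, LinearOrderedCommGroupWithZero (Γ j)]
    [DecidableEq ι] (s : Finset ι) (γ c : ∀ j, Γ j)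
    (hγ : ∀ j ∈ s, ∀ m : ℕ, 1 ≤ m → γ j ^ m = c j → 1 < γ j) :
    ∃ m : ℕ, 1 ≤ m ∧ ∀ j ∈ s, γ j ^ m ≠ c j := by
  classical
  set φ : ι → ℕ := fun j => if h : ∃ m : ℕ, γ j ^ m = c j then h.choose else 0 with hφ
  set C : Finset ℕ := (Finset.range (s.card + 1)).image (· + 1) with hC
  have hcard : (s.image φ).card < C.card := by
    have h1 : (s.image φ).card ≤ s.card := Finset.card_image_le
    have h2 : C.card = s.card + 1 := by
      rw [hC, Finset.card_image_of_injective _ (add_left_injective 1), Finset.card_range]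
    omega
  have hns : ¬ C ⊆ s.image φ := fun hsub => absurd (Finset.card_le_card hsub) (not_le.2 hcard)
  obtain ⟨m, hmC, hmB⟩ := Finset.not_subset.1 hns
  have hm1 : 1 ≤ m := by
    rw [hC, Finset.mem_image] at hmC
    obtain ⟨k, -, rfl⟩ := hmC
    omega
  refine ⟨m, hm1, fun j hj heq => ?_⟩
  have h1 : 1 < γ j := hγ j hj m hm1 heq
  have hex : ∃ m' : ℕ, γ j ^ m' = c j := ⟨m, heq⟩
  have hφj : γ j ^ φ j = c j := by
    rw [hφ]; simp only [dif_pos hex]; exact hex.choose_spec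
  have hmφ : m = φ j := by
    by_contra hne
    rcases Nat.lt_or_ge m (φ j) with hlt | hge
    · exact absurd (heq.trans hφj.symm) (ne_of_lt (pow_lt_pow_right₀ h1 hlt))
    · have hlt : φ j < m := Nat.lt_of_le_of_ne hge fun e => hne e.symm
      exact absurd (hφj.trans heq.symm) (ne_of_lt (pow_lt_pow_right₀ h1 hlt))
  exact hmB (Finset.mem_image.2 ⟨j, hj, hmφ.symm⟩)

/-- Let `O_1, …, O_n` be pairwise incomparable valuation subrings of a field `K` and let
`R = O_1 ∩ ⋯ ∩ O_n`.  Then for every `R`-submodule `M` of `K` and every `x ∈ K`: `x ∈ M`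
if and only if for each `i` there is some `a ∈ M` with `x ∈ a·O_i`, i.e. `x = a * r` for
some `r ∈ O_i`. -/
theorem mem_submodule_iff_forall_exists_dvd
    {K : Type*} [Field K] (n : ℕ) (hn : 0 < n)
    (O : Fin n → ValuationSubring K)
    (hincomp : ∀ i j, i ≠ j → ¬ O i ≤ O j)
    (R : Subring K) (hR : R = ⨅ i, (O i).toSubring)
    (M : Submodule ↥R K) (x : K) :
    x ∈ M ↔ ∀ i, ∃ a ∈ M, ∃ r ∈ O i, x = a * r := by
  classical
  constructor
  · intro hx i
    exact ⟨x, hx, 1, one_mem _, (mul_one x).symm⟩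
  intro h
  have hmemR : ∀ y : K, (∀ j, y ∈ O j) → y ∈ R := by
    intro y hy; rw [hR, Subring.mem_iInf]; exact hy
  -- Pair lemma
  have hpair : ∀ i j : Fin n, i ≠ j →
      ∃ a : K, (O i).valuation a < 1 ∧ 1 < (O j).valuation a := by
    intro i j hij
    obtain ⟨b, hbi, hbj⟩ := SetLike.not_le_iff_exists.1 (hincomp i j hij)
    obtain ⟨c, hcj, hci⟩ := SetLike.not_le_iff_exists.1 (hincomp j i hij.symm)
    have hc0 : c ≠ 0 := fun e => hci (e ▸ (O i).zero_mem)
    refine ⟨b / c, ?_, ?_⟩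
    · have h1 : (O i).valuation b ≤ 1 := ((O i).valuation_le_one_iff b).2 hbi
      have h2 : 1 < (O i).valuation c :=
        not_le.1 fun hle => hci (((O i).valuation_le_one_iff c).1 hle)
      rw [map_div₀, div_eq_mul_inv]
      calc (O i).valuation b * ((O i).valuation c)⁻¹
          ≤ 1 * ((O i).valuation c)⁻¹ := mul_le_mul_left h1 _
        _ = ((O i).valuation c)⁻¹ := one_mul _
        _ < 1 := inv_lt_one_of_one_lt₀ h2
    · have h1 : 1 < (O j).valuation b :=
        not_le.1 fun hle => hbj (((O j).valuation_le_one_iff b).1 hle)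
      have h2 : (O j).valuation c ≤ 1 := ((O j).valuation_le_one_iff c).2 hcj
      have h3 : (0 : (O j).ValueGroup) < (O j).valuation c :=
        zero_lt_iff.2 ((Valuation.ne_zero_iff _).2 hc0)
      rw [map_div₀, div_eq_mul_inv]
      calc (1 : (O j).ValueGroup) < (O j).valuation b := h1
        _ = (O j).valuation b * 1 := (mul_one _).symm
        _ ≤ (O j).valuation b * ((O j).valuation c)⁻¹ :=
            mul_le_mul_right ((one_le_inv₀ h3).2 h2) _
  -- Lemma A: element small at i, big at all j ≠ i
  have hA : ∀ i : Fin n, ∃ a : K,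
      (O i).valuation a < 1 ∧ ∀ j, j ≠ i → 1 < (O j).valuation a := by
    intro i
    suffices hsuff : ∀ T : Finset (Fin n), i ∉ T →
        ∃ a : K, (O i).valuation a < 1 ∧ ∀ j ∈ T, 1 < (O j).valuation a by
      obtain ⟨a, ha1, ha2⟩ := hsuff (Finset.univ.erase i) (Finset.notMem_erase i _)
      exact ⟨a, ha1, fun j hj => ha2 j (Finset.mem_erase.2 ⟨hj, Finset.mem_univ j⟩)⟩
    intro T
    induction T using Finset.induction_on with
    | empty =>
      exact fun _ => ⟨0, by simp, by simp⟩
    | insert _ _ hj0T =>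
      rename_i j0 T ih
      intro hiT
      have hij0 : i ≠ j0 := by
        intro e; subst e; exact hiT (Finset.mem_insert_self i T)
      have hiT' : i ∉ T := fun hmem => hiT (Finset.mem_insert_of_mem hmem)
      obtain ⟨a, ha1, ha2⟩ := ih hiT'
      obtain ⟨b, hb1, hb2⟩ := hpair i j0 hij0
      -- choose a good exponent m
      have hbad : ∀ j ∈ insert j0 T, ∀ m' : ℕ, 1 ≤ m' →
          (O j).valuation b ^ m' = (O j).valuation a → 1 < (O j).valuation b := by
        intro j hj m' hm'1 heq
        by_contra hle
        push_neg at hle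
        have hpow : (O j).valuation b ^ m' ≤ 1 := pow_le_one₀ zero_le' hle
        rcases Finset.mem_insert.1 hj with rfl | hjT
        · -- j = j0 : but 1 < v_{j0} b
          exact absurd hb2 (not_lt.2 hle)
        · -- j ∈ T : v_j a > 1 but γ^m' ≤ 1
          exact absurd (heq ▸ hpow) (not_le.2 (ha2 j hjT))
      obtain ⟨m, hm1, hm⟩ := exists_good_exponent (insert j0 T)
        (fun j => (O j).valuation b) (fun j => (O j).valuation a) hbad
      have hm0 : m ≠ 0 := by omega
      refine ⟨a + b ^ m, ?_, ?_⟩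
      · -- small at i
        have h1 : (O i).valuation (b ^ m) < 1 := by
          rw [map_pow]; exact pow_lt_one₀ zero_le' hb1 hm0
        calc (O i).valuation (a + b ^ m)
            ≤ max ((O i).valuation a) ((O i).valuation (b ^ m)) := Valuation.map_add _ _ _
          _ < 1 := max_lt ha1 h1
      · -- big at each j ∈ insert j0 T
        intro j hj
        have hne : (O j).valuation (b ^ m) ≠ (O j).valuation a := by
          rw [map_pow]; exact hm j hj
        rcases lt_or_gt_of_ne hne with hlt | hgt
        · -- v_j (a + b^m) = v_j a
          rw [add_comm, Valuation.map_add_eq_of_lt_right _ hlt]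
          rcases Finset.mem_insert.1 hj with rfl | hjT
          · -- j = j0 : v_j a > v_j b^m ≥ ... need 1 < v_j b^m
            have : (1 : (O j).ValueGroup) < (O j).valuation (b ^ m) := by
              rw [map_pow]
              calc (1 : (O j).ValueGroup) < (O j).valuation b := hb2
                _ = (O j).valuation b ^ 1 := (pow_one _).symm
                _ ≤ (O j).valuation b ^ m := pow_le_pow_right₀ hb2.le hm1
            exact this.trans hlt
          · exact ha2 j hjT
        · -- v_j (a + b^m) = v_j b^m
          rw [Valuation.map_add_eq_of_lt_right _ hgt]
          rcases Finset.mem_insert.1 hj with rfl | hjT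
          · rw [map_pow]
            calc (1 : (O j).ValueGroup) < (O j).valuation b := hb2
              _ = (O j).valuation b ^ 1 := (pow_one _).symm
              _ ≤ (O j).valuation b ^ m := pow_le_pow_right₀ hb2.le hm1
          · exact (ha2 j hjT).trans hgt
  -- z i : unit at i, small elsewhere
  have hz : ∀ i : Fin n, ∃ z : K, (O i).valuation z = 1 ∧
      ∀ j, j ≠ i → (O j).valuation z < 1 := by
    intro i
    obtain ⟨a, ha1, ha2⟩ := hA i
    refine ⟨(1 + a)⁻¹, ?_, ?_⟩
    · rw [map_inv₀, Valuation.map_one_add_of_lt _ ha1, inv_one]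
    · intro j hji
      have h1 : (O j).valuation (1 + a) = (O j).valuation a :=
        Valuation.map_add_eq_of_lt_right _ (by rw [map_one]; exact ha2 j hji)
      rw [map_inv₀, h1]
      exact inv_lt_one_of_one_lt₀ (ha2 j hji)
  choose aM haM r hrO hxar using h
  rcases eq_or_ne x 0 with rfl | hx0
  · exact M.zero_mem
  -- t i : in R, unit at i, with t i * r i ∈ R
  have hT : ∀ i : Fin n, ∃ t : K, (∀ j, (O j).valuation t ≤ 1) ∧ (O i).valuation t = 1 ∧
      (∀ j, (O j).valuation (t * r i) ≤ 1) := by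
    intro i
    obtain ⟨a, ha1, ha2⟩ := hA i
    have hbad : ∀ j ∈ Finset.univ.erase i, ∀ m' : ℕ, 1 ≤ m' →
        (O j).valuation a ^ m' = ((O j).valuation (r i))⁻¹ → 1 < (O j).valuation a :=
      fun j hj _ _ _ => ha2 j (Finset.mem_erase.1 hj).1
    obtain ⟨m, hm1, hm⟩ := exists_good_exponent (Finset.univ.erase i)
      (fun j => (O j).valuation a) (fun j => ((O j).valuation (r i))⁻¹) hbad
    have hm0 : m ≠ 0 := by omega
    set w : K := r i * a ^ m with hw
    have hwi : (O i).valuation w < 1 := by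
      rw [hw, map_mul, map_pow]
      calc (O i).valuation (r i) * (O i).valuation a ^ m
          ≤ 1 * (O i).valuation a ^ m :=
            mul_le_mul_left (((O i).valuation_le_one_iff _).2 (hrO i)) _
        _ = (O i).valuation a ^ m := one_mul _
        _ < 1 := pow_lt_one₀ zero_le' ha1 hm0
    have hrlew : ∀ j, j ≠ i → (O j).valuation (r i) ≤ (O j).valuation w := by
      intro j hji
      rw [hw, map_mul, map_pow]
      calc (O j).valuation (r i) = (O j).valuation (r i) * 1 := (mul_one _).symm
        _ ≤ (O j).valuation (r i) * (O j).valuation a ^ m :=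
            mul_le_mul_right (Left.one_le_pow_of_le (ha2 j hji).le m) _
    have hq : ∀ j, j ≠ i → (O j).valuation w ≠ 1 := by
      intro j hji heq
      have hj' : j ∈ Finset.univ.erase i := Finset.mem_erase.2 ⟨hji, Finset.mem_univ j⟩
      apply hm j hj'
      rw [hw, map_mul, map_pow] at heq
      exact eq_inv_of_mul_eq_one_right heq
    refine ⟨(1 + w)⁻¹, ?_, ?_, ?_⟩
    · intro j
      rcases eq_or_ne j i with rfl | hji
      · rw [map_inv₀, Valuation.map_one_add_of_lt _ hwi, inv_one]
      · rcases lt_or_gt_of_ne (hq j hji) with hlt | hgt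
        · rw [map_inv₀, Valuation.map_one_add_of_lt _ hlt, inv_one]
        · have h1 : (O j).valuation (1 + w) = (O j).valuation w :=
            Valuation.map_add_eq_of_lt_right _ (by rw [map_one]; exact hgt)
          rw [map_inv₀, h1]
          exact (inv_lt_one_of_one_lt₀ hgt).le
    · rw [map_inv₀, Valuation.map_one_add_of_lt _ hwi, inv_one]
    · intro j
      rcases eq_or_ne j i with rfl | hji
      · rw [map_mul, map_inv₀, Valuation.map_one_add_of_lt _ hwi, inv_one, one_mul]
        exact ((O j).valuation_le_one_iff _).2 (hrO j)
      · rcases lt_or_gt_of_ne (hq j hji) with hlt | hgt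
        · rw [map_mul, map_inv₀, Valuation.map_one_add_of_lt _ hlt, inv_one, one_mul]
          exact ((hrlew j hji).trans_lt hlt).le
        · have h1 : (O j).valuation (1 + w) = (O j).valuation w :=
            Valuation.map_add_eq_of_lt_right _ (by rw [map_one]; exact hgt)
          have hw0 : (O j).valuation w ≠ 0 := ne_of_gt (zero_lt_one.trans hgt)
          rw [map_mul, map_inv₀, h1]
          calc ((O j).valuation w)⁻¹ * (O j).valuation (r i)
              ≤ ((O j).valuation w)⁻¹ * (O j).valuation w :=
                mul_le_mul_right (hrlew j hji) _
            _ = 1 := inv_mul_cancel₀ hw0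
  choose z hz1 hz2 using hz
  choose t ht1 ht2 ht3 using hT
  set g : K := ∑ i, t i * z i with hg
  have hzle : ∀ i j, (O j).valuation (z i) ≤ 1 := by
    intro i j
    rcases eq_or_ne j i with rfl | hji
    · exact (hz1 j).le
    · exact (hz2 i j hji).le
  have hgval : ∀ j, (O j).valuation g = 1 := by
    intro j
    have hsum : g = t j * z j + ∑ i ∈ Finset.univ.erase j, t i * z i := by
      rw [hg, ← Finset.add_sum_erase _ _ (Finset.mem_univ j)]
    have hrest : (O j).valuation (∑ i ∈ Finset.univ.erase j, t i * z i) < 1 := by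
      refine Valuation.map_sum_lt _ one_ne_zero fun i hi => ?_
      have hij : j ≠ i := ((Finset.mem_erase.1 hi).1).symm
      rw [map_mul]
      calc (O j).valuation (t i) * (O j).valuation (z i)
          ≤ 1 * (O j).valuation (z i) := mul_le_mul_left (ht1 i j) _
        _ = (O j).valuation (z i) := one_mul _
        _ < 1 := hz2 i j hij
    have hfirst : (O j).valuation (t j * z j) = 1 := by
      rw [map_mul, ht2 j, hz1 j, one_mul]
    rw [hsum, Valuation.map_add_eq_of_lt_left _ (hrest.trans_eq hfirst.symm), hfirst]
  have hg0 : g ≠ 0 := by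
    intro e
    have h1 := hgval ⟨0, hn⟩
    rw [e, map_zero] at h1
    exact zero_ne_one h1
  have hginvR : g⁻¹ ∈ R := hmemR _ fun j =>
    (O j).mem_of_valuation_le_one _ (by rw [map_inv₀, hgval j, inv_one])
  have hcR : ∀ i : Fin n, z i * (t i * r i) ∈ R := fun i => hmemR _ fun j =>
    (O j).mem_of_valuation_le_one _ (by
      rw [map_mul]
      calc (O j).valuation (z i) * (O j).valuation (t i * r i)
          ≤ 1 * 1 := mul_le_mul' (hzle i j) (ht3 i j)
        _ = 1 := one_mul _)
  have hgx : g * x ∈ M := by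
    have hexp : g * x = ∑ i, z i * (t i * r i) * aM i := by
      rw [hg, Finset.sum_mul]
      refine Finset.sum_congr rfl fun i _ => ?_
      rw [hxar i]; ring
    rw [hexp]
    refine Submodule.sum_mem _ fun i _ => ?_
    exact M.smul_mem (⟨_, hcR i⟩ : R) (haM i)
  have hfin : x = (⟨g⁻¹, hginvR⟩ : R) • (g * x) := by
    show x = g⁻¹ * (g * x)
    rw [inv_mul_cancel_left₀ hg0]
  rw [hfin]
  exact M.smul_mem _ hgx
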